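/- Let x ≥ 3 and l ≥ 2 be real numbers, and set x' = x+1 and l' = l(1 − 1/(6(x+1))). Assume that the following holds for x', l': for every finite simple graph G' with a nonnegative weight function w' with w'(V(G')) ≠ 0, ordered nonincreasingly by w', if w'(I) ≤ w'(V(G'))/f(x',l') for every independent set I of G' and χ_f(N^L(v)) ≤ l' for every vertex v, then G' has a triangle-free spanning subgraph H' such that w'(I) ≤ w'(V(G'))/x' for every independent set I of H'. Now let G be a finite simple graph with a nonnegative weight function w with w(V(G)) ≠ 0, ordered nonincreasingly by w, such that w(I) ≤ w(V(G))/f(x,l) for every independent set I of G. Then for every (x,l)-reducible set A ⊆ V(G) there is a triangle-free subgraph H_A of G with vertex set A such that every independent set of H_A has weight at most w(A)/(x+1). -/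

import Mathlib

open scoped Classical

/-- The fractional chromatic number of a finite simple graph `G`. -/
noncomputable def fracChrom {V : Type} [Fintype V] (G : SimpleGraph V) : ℝ :=
  sInf { c : ℝ |
    ∃ y : Finset V → ℝ,
      (∀ I, 0 ≤ y I) ∧
      (∀ I : Finset V, y I ≠ 0 → ∀ u ∈ I, ∀ v ∈ I, ¬ G.Adj u v) ∧
      (∀ v : V, 1 ≤ ∑ I ∈ Finset.univ.filter (fun I : Finset V => v ∈ I), y I) ∧
      c = ∑ I : Finset V, y I }

/-- The function `f(x,l) = x · (Γ(x·l⁷ + 1)/Γ(x+1))³`. -/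
noncomputable def fGamma (x l : ℝ) : ℝ :=
  x * (Real.Gamma (x * l ^ 7 + 1) / Real.Gamma (x + 1)) ^ 3

lemma fGamma_key (x l : ℝ) (hx : 3 ≤ x) (hl : 2 ≤ l) :
    0 < fGamma (x+1) (l*(1-1/(6*(x+1)))) ∧
    x*(x+1)^2 * fGamma (x+1) (l*(1-1/(6*(x+1)))) ≤ fGamma x l := by
  set s : ℝ := 1/(6*(x+1)) with hs
  have hx1 : (0:ℝ) < x + 1 := by linarith
  have hs0 : 0 < s := by positivity
  have hs24 : s ≤ 1/24 := by
    rw [hs, div_le_div_iff₀ (by linarith) (by norm_num)]; linarith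
  have hseq : (x+1)*s = 1/6 := by rw [hs]; field_simp
  have h7 : (1-s)^7 ≤ 1 - 7*s + 21*s^2 := by
    have e : 1 - 7*s + 21*s^2 - (1-s)^7 = s^3*(35*(1-s) + 7*s^2*(3-s) + s^4) := by ring
    nlinarith [pow_nonneg hs0.le 3, pow_nonneg hs0.le 2, pow_nonneg hs0.le 4,
      mul_nonneg (pow_nonneg hs0.le 3) (by nlinarith : (0:ℝ) ≤ 35*(1-s) + 7*s^2*(3-s) + s^4)]
  have hsq : (x+1)*s^2 = s/6 := by rw [pow_two, ← mul_assoc, hseq]; ring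
  have hpoly : (x+1)*(1-s)^7 ≤ x := by nlinarith [hseq, hsq, hs24]
  have hl' : (23:ℝ)/12 ≤ l*(1-s) := by nlinarith [hs24, hs0]
  have hl'1 : (1:ℝ) ≤ (l*(1-s))^7 := one_le_pow₀ (by linarith)
  have hl0 : (0:ℝ) < l*(1-s) := by linarith
  have harg : (x+1)*(l*(1-s))^7 + 1 ≤ x*l^7 + 1 := by
    have : (x+1)*(l*(1-s))^7 = ((x+1)*(1-s)^7)*l^7 := by ring
    rw [this]
    have := mul_le_mul_of_nonneg_right hpoly (by positivity : (0:ℝ) ≤ l^7)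
    linarith
  have hmem' : (2:ℝ) ≤ (x+1)*(l*(1-s))^7 + 1 := by nlinarith [hl'1]
  have hmem : (2:ℝ) ≤ x*l^7 + 1 := by linarith
  have hg : Real.Gamma ((x+1)*(l*(1-s))^7+1) ≤ Real.Gamma (x*l^7+1) :=
    Real.Gamma_strictMonoOn_Ici.monotoneOn hmem' hmem harg
  have hG1 : 0 < Real.Gamma (x+1) := Real.Gamma_pos_of_pos hx1
  have hGa' : 0 < Real.Gamma ((x+1)*(l*(1-s))^7+1) := Real.Gamma_pos_of_pos (by nlinarith [hl'1])
  have hGa : 0 < Real.Gamma (x*l^7+1) := Real.Gamma_pos_of_pos (by nlinarith)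
  have hG2 : 0 < Real.Gamma (x+1+1) := Real.Gamma_pos_of_pos (by linarith)
  constructor
  · exact mul_pos hx1 (pow_pos (div_pos hGa' hG2) 3)
  · have e1 : x*(x+1)^2 * fGamma (x+1) (l*(1-s)) =
        x * (Real.Gamma ((x+1)*(l*(1-s))^7+1) / Real.Gamma (x+1))^3 := by
      unfold fGamma
      rw [Real.Gamma_add_one (ne_of_gt hx1)]
      field_simp
    rw [e1]
    unfold fGamma
    have h2 : Real.Gamma ((x+1)*(l*(1-s))^7+1) / Real.Gamma (x+1)
        ≤ Real.Gamma (x*l^7+1) / Real.Gamma (x+1) :=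
      div_le_div_of_nonneg_right hg hG1.le
    exact mul_le_mul_of_nonneg_left
      (pow_le_pow_left₀ (le_of_lt (div_pos hGa' hG1)) h2 3) (by linarith)

lemma fracChrom_le_of_iso {V W : Type} [Fintype V] [Fintype W]
    {G : SimpleGraph V} {H : SimpleGraph W} (e : G ≃g H) :
    fracChrom G ≤ fracChrom H := by
  apply csInf_le_csInf
  · refine ⟨0, fun c hc => ?_⟩
    obtain ⟨y, hy0, -, -, rfl⟩ := hc
    exact Finset.sum_nonneg fun I _ => hy0 I
  · refine ⟨∑ J : Finset W, (if J.card = 1 then (1:ℝ) else 0),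
      fun J => if J.card = 1 then 1 else 0, fun J => by positivity, ?_, ?_, rfl⟩
    · intro J hJ u hu v hv
      have hc : J.card = 1 := by by_contra h; simp [h] at hJ
      obtain ⟨a, rfl⟩ := Finset.card_eq_one.mp hc
      simp only [Finset.mem_singleton] at hu hv
      subst hu; subst hv
      exact H.irrefl
    · intro v
      have hmem : ({v} : Finset W) ∈ Finset.univ.filter (fun J : Finset W => v ∈ J) := by
        simp
      have := Finset.single_le_sum (f := fun J : Finset W => if J.card = 1 then (1:ℝ) else 0)
        (fun J _ => by positivity) hmem
      simpa using this
  · rintro c ⟨y, hy0, hyind, hycov, rfl⟩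
    refine ⟨fun I => y (I.map e.toEquiv.toEmbedding), fun I => hy0 _, ?_, ?_, ?_⟩
    · intro I hI u hu v hv hadj
      exact hyind _ hI (e u) (Finset.mem_map_of_mem _ hu) (e v) (Finset.mem_map_of_mem _ hv)
        (e.map_rel_iff.mpr hadj)
    · intro v
      have h1 := hycov (e v)
      rw [Finset.sum_filter] at h1 ⊢
      refine le_trans h1 (le_of_eq ?_)
      refine (Fintype.sum_equiv e.toEquiv.finsetCongr
        (fun I : Finset V => if v ∈ I then y (I.map e.toEquiv.toEmbedding) else 0)
        (fun J : Finset W => if e v ∈ J then y J else 0) (fun I => ?_)).symm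
      simp only [Equiv.finsetCongr_apply]
      have hv : e.toEquiv.symm (e v) = v := e.toEquiv.symm_apply_apply v
      by_cases h : v ∈ I <;> simp [Finset.mem_map_equiv, hv, h]
    · exact (Fintype.sum_equiv e.toEquiv.finsetCongr _ _
        (fun I => by rw [Equiv.finsetCongr_apply])).symm

theorem reducible_sets_carry_triangle_free_subgraph
    (x l : ℝ) (hx : 3 ≤ x) (hl : 2 ≤ l)
    -- hypothesis: the spanning-subgraph lemma holds for x' = x+1 and l' = l(1 - 1/(6(x+1)))
    (hyp : ∀ (V' : Type) [Fintype V'] [LinearOrder V'] (G' : SimpleGraph V')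
        (w' : V' → ℝ), (∀ v, 0 ≤ w' v) → (∀ u v : V', u < v → w' v ≤ w' u) →
        (∑ v, w' v) ≠ 0 →
        (∀ I : Finset V', (∀ u ∈ I, ∀ v ∈ I, ¬ G'.Adj u v) →
          ∑ v ∈ I, w' v ≤ (∑ v, w' v) / fGamma (x + 1) (l * (1 - 1 / (6 * (x + 1))))) →
        (∀ v : V', fracChrom (G'.induce {u | G'.Adj u v ∧ u < v}) ≤
          l * (1 - 1 / (6 * (x + 1)))) →
        ∃ H' : SimpleGraph V', H' ≤ G' ∧ H'.CliqueFree 3 ∧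
          ∀ I : Finset V', (∀ u ∈ I, ∀ v ∈ I, ¬ H'.Adj u v) →
            ∑ v ∈ I, w' v ≤ (∑ v, w' v) / (x + 1))
    (V : Type) [Fintype V] [LinearOrder V] (G : SimpleGraph V)
    (w : V → ℝ) (hw0 : ∀ v, 0 ≤ w v)
    (hmono : ∀ u v : V, u < v → w v ≤ w u)
    (hwV : ∑ v, w v ≠ 0)
    (hindep : ∀ I : Finset V, (∀ u ∈ I, ∀ v ∈ I, ¬ G.Adj u v) →
      ∑ v ∈ I, w v ≤ (∑ v, w v) / fGamma x l)
    -- A is an (x,l)-reducible set: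
    (A : Finset V)
    (hA1 : (∑ v, w v) / (x * (x + 1) ^ 2) ≤ ∑ v ∈ A, w v)
    (hA2 : ∀ v ∈ A, fracChrom (G.induce {u | u ∈ A ∧ G.Adj u v ∧ u < v}) ≤
      l * (1 - 1 / (6 * (x + 1)))) :
    ∃ H : G.Subgraph, H.verts = ↑A ∧ H.coe.CliqueFree 3 ∧
      ∀ I : Finset V, ↑I ⊆ (↑A : Set V) → (∀ u ∈ I, ∀ v ∈ I, ¬ H.Adj u v) →
        ∑ v ∈ I, w v ≤ (∑ v ∈ A, w v) / (x + 1) := by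
  classical
  obtain ⟨hfpos, hfle⟩ := fGamma_key x l hx hl
  have hxpos : (0:ℝ) < x := by linarith
  have hW0 : 0 < ∑ v, w v :=
    lt_of_le_of_ne (Finset.sum_nonneg fun v _ => hw0 v) (Ne.symm hwV)
  have hA0 : 0 < ∑ v ∈ A, w v := lt_of_lt_of_le (by positivity) hA1
  have hfpos' : 0 < fGamma x l := lt_of_lt_of_le (by positivity) hfle
  have hsum_eq : ∑ v : (↑A : Set V), w v.1 = ∑ v ∈ A, w v := by
    exact (Finset.sum_subtype A (fun x => Iff.rfl) w).symm
  -- apply hyp to the induced graph on A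
  obtain ⟨H', hH'le, hH'tf, hH'ind⟩ :=
    hyp _ (G.induce (↑A : Set V)) (fun v => w v.1)
      (fun v => hw0 v.1)
      (fun u v h => hmono u.1 v.1 (Subtype.coe_lt_coe.mpr h))
      (by rw [hsum_eq]; exact ne_of_gt hA0)
      (by
        intro I' hI'
        have hJ : ∑ v ∈ I'.image Subtype.val, w v = ∑ v ∈ I', w v.1 :=
          Finset.sum_image (fun a _ b _ h => Subtype.ext h)
        have hJind : ∀ u ∈ I'.image Subtype.val, ∀ v ∈ I'.image Subtype.val, ¬ G.Adj u v := by
          intro u hu v hv hadj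
          obtain ⟨u', hu', rfl⟩ := Finset.mem_image.mp hu
          obtain ⟨v', hv', rfl⟩ := Finset.mem_image.mp hv
          exact hI' u' hu' v' hv' hadj
        have h1 := hindep _ hJind
        rw [hJ] at h1
        rw [hsum_eq]
        refine le_trans h1 ?_
        calc (∑ v, w v) / fGamma x l
            ≤ (∑ v, w v) / (x*(x+1)^2 * fGamma (x+1) (l*(1-1/(6*(x+1))))) :=
              div_le_div_of_nonneg_left hW0.le (by positivity) hfle
          _ = ((∑ v, w v) / (x*(x+1)^2)) / fGamma (x+1) (l*(1-1/(6*(x+1)))) := by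
              rw [div_div]
          _ ≤ (∑ v ∈ A, w v) / fGamma (x+1) (l*(1-1/(6*(x+1)))) :=
              div_le_div_of_nonneg_right hA1 hfpos.le)
      (by
        intro v
        refine le_trans (fracChrom_le_of_iso ?_) (hA2 v.1 v.2)
        exact ⟨⟨fun u => ⟨u.1.1, u.1.2, u.2.1, Subtype.coe_lt_coe.mpr u.2.2⟩,
          fun u => ⟨⟨u.1, u.2.1⟩, u.2.2.1, Subtype.coe_lt_coe.mp u.2.2.2⟩,
          fun u => rfl, fun u => rfl⟩, Iff.rfl⟩)
  -- build the subgraph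
  let Hsub : G.Subgraph :=
    { verts := ↑A
      Adj := fun a b => ∃ (ha : a ∈ (↑A : Set V)) (hb : b ∈ (↑A : Set V)),
        H'.Adj ⟨a, ha⟩ ⟨b, hb⟩
      adj_sub := by rintro a b ⟨ha, hb, h⟩; exact hH'le h
      edge_vert := by rintro a b ⟨ha, hb, h⟩; exact ha
      symm := by constructor; rintro a b ⟨ha, hb, h⟩; exact ⟨hb, ha, h.symm⟩ }
  have hcoe : Hsub.coe = H' := by
    ext a b
    constructor
    · rintro ⟨ha, hb, h⟩; exact h
    · intro h; exact ⟨a.2, b.2, h⟩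
  refine ⟨Hsub, rfl, by rw [hcoe]; exact hH'tf, ?_⟩
  intro I hIsub hIind
  have hI'ind : ∀ u ∈ I.subtype (fun a => a ∈ (↑A : Set V)),
      ∀ v ∈ I.subtype (fun a => a ∈ (↑A : Set V)), ¬ H'.Adj u v := by
    intro u hu v hv h
    exact hIind u.1 (Finset.mem_subtype.mp hu) v.1 (Finset.mem_subtype.mp hv) ⟨u.2, v.2, h⟩
  have h2 := hH'ind _ hI'ind
  rw [hsum_eq] at h2
  have h3 : ∑ v ∈ I.subtype (fun a => a ∈ (↑A : Set V)), w v.1 = ∑ v ∈ I, w v := by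
    rw [Finset.sum_subtype_eq_sum_filter]
    exact Finset.sum_congr (Finset.filter_true_of_mem fun a ha => hIsub ha) fun _ _ => rfl
  rwa [h3] at h2
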